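/- Let d ≥ 1 and ε, m ∈ {0,…,2^d−1}. Then Δ^d_{2^d−ε}(m) = −Δ^d_ε(2^d−1−m), i.e., HW((m + 2^d − ε) mod 2^d) − HW(m) = −( HW((2^d−1−m+ε) mod 2^d) − HW(2^d−1−m) ). (The Hamming-weight bias table for a bias larger than q/2 is obtained from the column of the complementary bias by reversing the order of the rows and multiplying by −1.) -/

import Mathlib

/-- Hamming weight: number of ones in the binary expansion. -/
def HW (m : ℕ) : ℕ := (Nat.digits 2 m).sum

/-- Hamming-weight bias `Δ^d_ε(m) = HW((m+ε) mod 2^d) − HW(m)`. -/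
def Δ (d ε m : ℕ) : ℤ := (HW ((m + ε) % 2 ^ d) : ℤ) - (HW m : ℤ)

lemma HW_step (x : ℕ) : HW x = x % 2 + HW (x / 2) := by
  rcases Nat.eq_zero_or_pos x with h | h
  · simp [h, HW]
  · unfold HW
    rw [Nat.digits_def' (by norm_num) h]
    simp [List.sum_cons]

lemma HW_compl : ∀ d x : ℕ, x < 2 ^ d → HW x + HW (2 ^ d - 1 - x) = d := by
  intro d
  induction d with
  | zero => intro x hx; interval_cases x; simp [HW]
  | succ d ih =>
    intro x hx
    have hq : x / 2 < 2 ^ d := by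
      have : x < 2 * 2 ^ d := by rw [pow_succ] at hx; omega
      omega
    have h1 : 2 ^ (d + 1) - 1 - x = 2 * (2 ^ d - 1 - x / 2) + (1 - x % 2) := by
      have := Nat.div_add_mod x 2
      have h2 : x % 2 < 2 := Nat.mod_lt _ (by norm_num)
      rw [pow_succ] at *
      omega
    have h3 := ih (x / 2) hq
    rw [HW_step x, HW_step (2 ^ (d + 1) - 1 - x), h1]
    have h2 : x % 2 < 2 := Nat.mod_lt _ (by norm_num)
    have e1 : (2 * (2 ^ d - 1 - x / 2) + (1 - x % 2)) % 2 = 1 - x % 2 := by omega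
    have e2 : (2 * (2 ^ d - 1 - x / 2) + (1 - x % 2)) / 2 = 2 ^ d - 1 - x / 2 := by omega
    rw [e1, e2]
    omega

theorem bias_table_symmetry (d : ℕ) (hd : 1 ≤ d) (ε m : ℕ)
    (hε : ε < 2 ^ d) (hm : m < 2 ^ d) :
    Δ d (2 ^ d - ε) m = - Δ d ε (2 ^ d - 1 - m) := by
  unfold Δ
  set A := (m + (2 ^ d - ε)) % 2 ^ d with hA
  set B := (2 ^ d - 1 - m + ε) % 2 ^ d with hB
  have hpos : 0 < 2 ^ d := Nat.two_pow_pos d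
  have hAB : A + B = 2 ^ d - 1 := by
    rcases le_or_gt ε m with h | h
    · have hA' : A = m - ε := by
        rw [hA]
        have : m + (2 ^ d - ε) = (m - ε) + 2 ^ d := by omega
        rw [this, Nat.add_mod_right, Nat.mod_eq_of_lt (by omega)]
      have hB' : B = 2 ^ d - 1 - m + ε := by
        rw [hB, Nat.mod_eq_of_lt (by omega)]
      omega
    · have hA' : A = m + (2 ^ d - ε) := by
        rw [hA, Nat.mod_eq_of_lt (by omega)]
      have hB' : B = ε - m - 1 := by
        rw [hB]
        have : 2 ^ d - 1 - m + ε = (ε - m - 1) + 2 ^ d := by omega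
        rw [this, Nat.add_mod_right, Nat.mod_eq_of_lt (by omega)]
      omega
  have hBlt : B < 2 ^ d := Nat.mod_lt _ hpos
  have hAeq : A = 2 ^ d - 1 - B := by omega
  have h1 : HW A + HW B = d := by
    rw [hAeq, Nat.add_comm]; exact HW_compl d B hBlt
  have h2 : HW m + HW (2 ^ d - 1 - m) = d := HW_compl d m hm
  push_cast
  omega
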